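/- arXiv:1101.5785 — 2 statements merged into one kernel-verified Lean document; each statement's English description precedes it below -/
import Mathlib

section
/- Let x ∈ ℝ^N be a random vector, Φ an M×N matrix, K ⊂ {1,…,N}, and ‖·‖_X a norm. If there exists a decoder Δ with Φ(Δ(Φx)) = Φx such that E‖η‖_X ≤ (C₀/2)·E‖η − η_K‖_X where η = x − Δ(Φx), then the decoder Δ'(y) = argmin_{z : Φz = y} ‖z − z_K‖_X satisfies the instance optimality in expectation E‖x − Δ'(Φx)‖_X ≤ C₀·E‖x − x_K‖_X. -/
open Matrix MeasureTheory

/-- Restriction of a vector to an index set `K` (zero outside `K`). -/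
def restr {N : ℕ} (K : Finset (Fin N)) (v : Fin N → ℝ) : Fin N → ℝ :=
  fun n => if n ∈ K then v n else 0

theorem stmt7 {Ω : Type} [MeasureSpace Ω] [IsProbabilityMeasure (volume : Measure Ω)]
    {N M : ℕ} (x : Ω → Fin N → ℝ) (Φ : Matrix (Fin M) (Fin N) ℝ)
    (K : Finset (Fin N)) (nX : (Fin N → ℝ) → ℝ)
    (hnX0 : ∀ v, 0 ≤ nX v) (hnXadd : ∀ v w, nX (v + w) ≤ nX v + nX w)
    (hnXneg : ∀ v, nX (-v) = nX v)
    (C₀ : ℝ) (hC₀ : 0 ≤ C₀)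
    (Δ : (Fin M → ℝ) → (Fin N → ℝ))
    -- Δ is consistent: Φ(Δ(Φ v)) = Φ v
    (hcons : ∀ v : Fin N → ℝ, Φ.mulVec (Δ (Φ.mulVec v)) = Φ.mulVec v)
    -- Δ is the argmin decoder: Δ(Φ v) minimizes ‖z − z_K‖_X over feasible z
    (hmin : ∀ v z : Fin N → ℝ, Φ.mulVec z = Φ.mulVec v →
      nX (Δ (Φ.mulVec v) - restr K (Δ (Φ.mulVec v))) ≤ nX (z - restr K z))
    -- null space property in expectation with constant C₀/2
    (hNSP : ∫ ω, nX (x ω - Δ (Φ.mulVec (x ω))) ≤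
      (C₀ / 2) * ∫ ω, nX ((x ω - Δ (Φ.mulVec (x ω))) - restr K (x ω - Δ (Φ.mulVec (x ω)))))
    (hint1 : Integrable (fun ω => nX (x ω - restr K (x ω))))
    (hint2 : Integrable (fun ω => nX (Δ (Φ.mulVec (x ω)) - restr K (Δ (Φ.mulVec (x ω)))))) :
    -- instance optimality in expectation with constant C₀
    ∫ ω, nX (x ω - Δ (Φ.mulVec (x ω))) ≤ C₀ * ∫ ω, nX (x ω - restr K (x ω)) := by
  have hsubadd : ∀ a b : Fin N → ℝ, nX (a - b) ≤ nX a + nX b := by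
    intro a b
    have := hnXadd a (-b)
    rwa [hnXneg b, ← sub_eq_add_neg] at this
  have hrestr : ∀ a b : Fin N → ℝ, restr K (a - b) = restr K a - restr K b := by
    intro a b
    funext n
    simp only [restr, Pi.sub_apply]
    split <;> simp
  -- pointwise bound
  have hpt : ∀ ω, nX ((x ω - Δ (Φ.mulVec (x ω))) - restr K (x ω - Δ (Φ.mulVec (x ω)))) ≤
      nX (x ω - restr K (x ω)) + nX (Δ (Φ.mulVec (x ω)) - restr K (Δ (Φ.mulVec (x ω)))) := by
    intro ω
    have h1 : (x ω - Δ (Φ.mulVec (x ω))) - restr K (x ω - Δ (Φ.mulVec (x ω))) =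
        (x ω - restr K (x ω)) - (Δ (Φ.mulVec (x ω)) - restr K (Δ (Φ.mulVec (x ω)))) := by
      rw [hrestr]; abel
    rw [h1]
    exact hsubadd _ _
  have hmin' : ∀ ω, nX (Δ (Φ.mulVec (x ω)) - restr K (Δ (Φ.mulVec (x ω)))) ≤
      nX (x ω - restr K (x ω)) := fun ω => hmin (x ω) (x ω) rfl
  have hint : ∫ ω, nX ((x ω - Δ (Φ.mulVec (x ω))) - restr K (x ω - Δ (Φ.mulVec (x ω)))) ≤
      2 * ∫ ω, nX (x ω - restr K (x ω)) := by
    calc ∫ ω, nX ((x ω - Δ (Φ.mulVec (x ω))) - restr K (x ω - Δ (Φ.mulVec (x ω))))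
        ≤ ∫ ω, (nX (x ω - restr K (x ω)) + nX (Δ (Φ.mulVec (x ω)) - restr K (Δ (Φ.mulVec (x ω))))) := by
          apply integral_mono_of_nonneg
          · filter_upwards with ω using hnX0 _
          · exact hint1.add hint2
          · filter_upwards with ω using hpt ω
      _ = (∫ ω, nX (x ω - restr K (x ω))) + ∫ ω, nX (Δ (Φ.mulVec (x ω)) - restr K (Δ (Φ.mulVec (x ω)))) :=
          integral_add hint1 hint2
      _ ≤ (∫ ω, nX (x ω - restr K (x ω))) + ∫ ω, nX (x ω - restr K (x ω)) := by
          gcongr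
          exact fun ω => hmin' ω
      _ = 2 * ∫ ω, nX (x ω - restr K (x ω)) := by ring
  calc ∫ ω, nX (x ω - Δ (Φ.mulVec (x ω))) ≤ _ := hNSP
    _ ≤ (C₀ / 2) * (2 * ∫ ω, nX (x ω - restr K (x ω))) := by
        apply mul_le_mul_of_nonneg_left hint (by positivity)
    _ = C₀ * ∫ ω, nX (x ω - restr K (x ω)) := by ring
end

section
/- Let η ∈ ℝ^N satisfy Φη = 0, where Φ has the linear RIP of order 2k with constant δ < 1 over the consecutive blocks K = {1,…,k}, K₁ = {k+1,…,2k}, etc. If moreover for each j the block norms satisfy ‖η_{K_{j+1}}‖₁ ≤ ‖η_{K_j}‖₁, then ‖η‖₁ ≤ (1 + k^{1/2}·(1+δ)/(1−δ))·‖η_{K^C}‖₁, where K^C = {k+1,…,N}. -/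
open Matrix

noncomputable def l2 {N : ℕ} (v : Fin N → ℝ) : ℝ := Real.sqrt (∑ n, v n ^ 2)

def l1 {N : ℕ} (v : Fin N → ℝ) : ℝ := ∑ n, |v n|

/-- Restriction of a vector to the `j`-th consecutive block of size `k`. -/
def blockRestr {N : ℕ} (k j : ℕ) (v : Fin N → ℝ) : Fin N → ℝ :=
  fun n => if j * k ≤ (n : ℕ) ∧ (n : ℕ) < (j + 1) * k then v n else 0

lemma l1_nonneg {N : ℕ} (v : Fin N → ℝ) : 0 ≤ l1 v :=
  Finset.sum_nonneg fun _ _ => abs_nonneg _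

lemma l2_eq_norm {M : ℕ} (v : Fin M → ℝ) :
    l2 v = ‖(WithLp.equiv 2 (Fin M → ℝ)).symm v‖ := by
  rw [EuclideanSpace.norm_eq]
  simp [l2, Real.norm_eq_abs, sq_abs]

lemma l2_sum_le {M : ℕ} {ι : Type*} (s : Finset ι) (f : ι → Fin M → ℝ) :
    l2 (fun m => ∑ j ∈ s, f j m) ≤ ∑ j ∈ s, l2 (f j) := by
  have h := norm_sum_le (E := EuclideanSpace ℝ (Fin M)) s
    (fun j => (WithLp.equiv 2 (Fin M → ℝ)).symm (f j))
  simp only [l2_eq_norm]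
  refine le_trans (le_of_eq ?_) h
  congr 1
  ext m
  simp [WithLp.ofLp_sum]

lemma l2_le_l1 {N : ℕ} (v : Fin N → ℝ) : l2 v ≤ l1 v := by
  have h : ∑ n, v n ^ 2 ≤ (∑ n, |v n|) ^ 2 := by
    have := Finset.sum_sq_le_sq_sum_of_nonneg (f := fun n => |v n|)
      (s := (Finset.univ : Finset (Fin N))) (fun i _ => abs_nonneg _)
    simpa [sq_abs] using this
  calc l2 v ≤ Real.sqrt ((∑ n, |v n|) ^ 2) := Real.sqrt_le_sqrt h
    _ = l1 v := Real.sqrt_sq (l1_nonneg v)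

lemma l2_neg {N : ℕ} (v : Fin N → ℝ) : l2 (fun n => - v n) = l2 v := by
  simp [l2]

set_option linter.unusedVariables false in
theorem stmt9 {M N k : ℕ} (hk : 0 < k) (δ : ℝ) (hδ0 : 0 ≤ δ) (hδ : δ < 1)
    (Φ : Matrix (Fin M) (Fin N) ℝ)
    -- linear RIP of order 2k: the RIP bounds hold on every pair of consecutive blocks of size k
    (hRIP : ∀ v : Fin N → ℝ,
      (∃ j : ℕ, ∀ n : Fin N, ((n : ℕ) < j * k ∨ (j + 2) * k ≤ (n : ℕ)) → v n = 0) →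
      (1 - δ) * l2 v ≤ l2 (Φ.mulVec v) ∧ l2 (Φ.mulVec v) ≤ (1 + δ) * l2 v)
    (η : Fin N → ℝ) (hη : Φ.mulVec η = 0)
    -- block ℓ¹ norms decay
    (hdecay : ∀ j : ℕ, l1 (blockRestr k (j + 1) η) ≤ l1 (blockRestr k j η)) :
    l1 η ≤ (1 + Real.sqrt k * (1 + δ) / (1 - δ)) *
      l1 (fun n => if k ≤ (n : ℕ) then η n else 0) := by
  have hδ' : (0:ℝ) < 1 - δ := by linarith
  set B : ℕ → Fin N → ℝ := fun j => blockRestr k j η with hBdef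
  set ηc : Fin N → ℝ := fun n => if k ≤ (n : ℕ) then η n else 0 with hηc
  set T : ℝ := l1 ηc with hT
  -- decomposition
  have hA : ∀ n : Fin N, ∑ j ∈ Finset.range (N+2), B j n = η n := by
    intro n
    have hq1 : (n : ℕ) / k * k ≤ (n : ℕ) := Nat.div_mul_le_self _ _
    have hq2 : (n : ℕ) < ((n : ℕ) / k + 1) * k := by
      have h1 := Nat.div_add_mod (n : ℕ) k
      have h2 := Nat.mod_lt (n : ℕ) hk
      have : ((n:ℕ)/k + 1) * k = k * ((n:ℕ)/k) + k := by ring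
      omega
    have hmem : (n : ℕ) / k ∈ Finset.range (N+2) :=
      Finset.mem_range.2 (lt_of_le_of_lt (Nat.div_le_self _ _) (by omega))
    rw [Finset.sum_eq_single_of_mem ((n:ℕ)/k) hmem]
    · show blockRestr k _ η n = η n
      rw [blockRestr, if_pos ⟨hq1, hq2⟩]
    · intro j _ hne
      show blockRestr k j η n = 0
      rw [blockRestr, if_neg]
      rintro ⟨h1, h2⟩
      exact hne (Nat.div_eq_of_lt_le h1 h2 ▸ rfl)
  -- tail identity
  have hTail : ∑ j ∈ Finset.Ico 1 (N+2), l1 (B j) = T := by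
    rw [hT, hηc]
    unfold l1
    rw [Finset.sum_comm]
    refine Finset.sum_congr rfl fun n _ => ?_
    beta_reduce
    by_cases hn : k ≤ (n : ℕ)
    · have hq1 : (n : ℕ) / k * k ≤ (n : ℕ) := Nat.div_mul_le_self _ _
      have hq2 : (n : ℕ) < ((n : ℕ) / k + 1) * k := by
        have h1 := Nat.div_add_mod (n : ℕ) k
        have h2 := Nat.mod_lt (n : ℕ) hk
        have : ((n:ℕ)/k + 1) * k = k * ((n:ℕ)/k) + k := by ring
        omega
      have hmem : (n : ℕ) / k ∈ Finset.Ico 1 (N+2) := by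
        rw [Finset.mem_Ico]
        exact ⟨(Nat.one_le_div_iff hk).2 hn,
          lt_of_le_of_lt (Nat.div_le_self _ _) (by omega)⟩
      rw [Finset.sum_eq_single_of_mem ((n:ℕ)/k) hmem, if_pos hn]
      · show |blockRestr k _ η n| = _
        rw [blockRestr, if_pos ⟨hq1, hq2⟩]
      · intro j _ hne
        show |blockRestr k j η n| = 0
        rw [blockRestr, if_neg, abs_zero]
        rintro ⟨h1, h2⟩
        exact hne (Nat.div_eq_of_lt_le h1 h2 ▸ rfl)
    · rw [if_neg hn, abs_zero]
      refine Finset.sum_eq_zero fun j hj => ?_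
      show |blockRestr k j η n| = 0
      rw [blockRestr, if_neg, abs_zero]
      rintro ⟨h1, _⟩
      have : 1 * k ≤ j * k := Nat.mul_le_mul_right k (Finset.mem_Ico.1 hj).1
      omega
  -- split of l1 η
  have hsplit : l1 η = l1 (B 0) + T := by
    rw [hT, hηc]
    unfold l1
    rw [← Finset.sum_add_distrib]
    refine Finset.sum_congr rfl fun n _ => ?_
    by_cases hn : (n : ℕ) < k
    · have hB0 : B 0 n = η n := by
        show blockRestr k 0 η n = η n
        rw [blockRestr, if_pos (by omega)]
      rw [hB0]
      simp [not_le.2 hn]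
    · have hB0 : B 0 n = 0 := by
        show blockRestr k 0 η n = 0
        rw [blockRestr, if_neg (by omega)]
      rw [hB0]
      simp [not_lt.1 hn]
  -- v01 and supports
  set v01 : Fin N → ℝ := fun n => B 0 n + B 1 n with hv01
  have hsupp01 : ∃ j : ℕ, ∀ n : Fin N,
      ((n : ℕ) < j * k ∨ (j + 2) * k ≤ (n : ℕ)) → v01 n = 0 := by
    refine ⟨0, fun n h => ?_⟩
    rcases h with h | h
    · omega
    · show blockRestr k 0 η n + blockRestr k 1 η n = 0
      rw [blockRestr, blockRestr, if_neg (by omega), if_neg (by omega), add_zero]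
  have hsuppB : ∀ j : ℕ, ∀ n : Fin N,
      ((n : ℕ) < j * k ∨ (j + 2) * k ≤ (n : ℕ)) → B j n = 0 := by
    intro j n h
    show blockRestr k j η n = 0
    rcases h with h | h
    · rw [blockRestr, if_neg (by omega)]
    · rw [blockRestr, if_neg (by
        rintro ⟨h1, h2⟩
        have : (j + 1) * k ≤ (j + 2) * k := Nat.mul_le_mul_right k (by omega)
        omega)]
  -- Φ v01 = - tail
  have hηeq : η = ∑ j ∈ Finset.range (N+2), B j := by
    funext n
    rw [Finset.sum_apply]
    exact (hA n).symm
  have h1 : (0 : Fin M → ℝ) = ∑ j ∈ Finset.range (N+2), Φ.mulVec (B j) := by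
    rw [← hη, hηeq]
    simp only [← Matrix.mulVecLin_apply]
    exact map_sum _ _ _
  have h2 : ∑ j ∈ Finset.range (N+2), Φ.mulVec (B j)
      = (Φ.mulVec (B 0) + Φ.mulVec (B 1))
        + ∑ j ∈ Finset.Ico 2 (N+2), Φ.mulVec (B j) := by
    rw [Finset.range_eq_Ico,
      ← Finset.sum_Ico_consecutive _ (by omega : 0 ≤ 2) (by omega : 2 ≤ N+2)]
    congr 1
    rw [← Finset.range_eq_Ico, Finset.sum_range_succ, Finset.sum_range_one]
  have h3 : Φ.mulVec v01 = Φ.mulVec (B 0) + Φ.mulVec (B 1) := by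
    have hv : v01 = B 0 + B 1 := rfl
    rw [hv, Matrix.mulVec_add]
  have hΦeq : Φ.mulVec v01
      = fun m => - ∑ j ∈ Finset.Ico 2 (N+2), Φ.mulVec (B j) m := by
    funext m
    have hc := congrFun h1 m
    rw [h2] at hc
    simp only [Pi.add_apply, Pi.zero_apply, Finset.sum_apply] at hc
    rw [h3]
    simp only [Pi.add_apply]
    linarith
  -- l2 chain on the RIP side
  have hl2Φ : l2 (Φ.mulVec v01)
      ≤ ∑ j ∈ Finset.Ico 2 (N+2), l2 (Φ.mulVec (B j)) := by
    rw [hΦeq]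
    calc l2 (fun m => - ∑ j ∈ Finset.Ico 2 (N+2), Φ.mulVec (B j) m)
        = l2 (fun m => ∑ j ∈ Finset.Ico 2 (N+2), Φ.mulVec (B j) m) := l2_neg _
      _ ≤ _ := l2_sum_le _ _
  have hSum : ∑ j ∈ Finset.Ico 2 (N+2), l2 (Φ.mulVec (B j)) ≤ (1 + δ) * T := by
    calc ∑ j ∈ Finset.Ico 2 (N+2), l2 (Φ.mulVec (B j))
        ≤ ∑ j ∈ Finset.Ico 2 (N+2), (1 + δ) * l1 (B j) := by
          refine Finset.sum_le_sum fun j _ => ?_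
          have hr := (hRIP (B j) ⟨j, hsuppB j⟩).2
          have := l2_le_l1 (B j)
          nlinarith [Real.sqrt_nonneg (∑ n, B j n ^ 2)]
      _ = (1 + δ) * ∑ j ∈ Finset.Ico 2 (N+2), l1 (B j) := by
          rw [Finset.mul_sum]
      _ ≤ (1 + δ) * ∑ j ∈ Finset.Ico 1 (N+2), l1 (B j) := by
          refine mul_le_mul_of_nonneg_left ?_ (by linarith)
          refine Finset.sum_le_sum_of_subset_of_nonneg
            (Finset.Ico_subset_Ico (by omega) le_rfl)
            (fun j _ _ => l1_nonneg _)
      _ = (1 + δ) * T := by rw [hTail]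
  have hlow : (1 - δ) * l2 v01 ≤ l2 (Φ.mulVec v01) := (hRIP v01 hsupp01).1
  -- l2 (B 0) ≤ l2 v01
  have hB0v01 : l2 (B 0) ≤ l2 v01 := by
    apply Real.sqrt_le_sqrt
    refine Finset.sum_le_sum fun n _ => ?_
    by_cases hn : (n : ℕ) < k
    · have hB1 : B 1 n = 0 := by
        show blockRestr k 1 η n = 0
        rw [blockRestr, if_neg (by omega)]
      show B 0 n ^ 2 ≤ (B 0 n + B 1 n) ^ 2
      rw [hB1, add_zero]
    · have hB0 : B 0 n = 0 := by
        show blockRestr k 0 η n = 0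
        rw [blockRestr, if_neg (by omega)]
      show B 0 n ^ 2 ≤ (B 0 n + B 1 n) ^ 2
      rw [hB0]
      simpa using sq_nonneg (B 1 n)
  -- l1 (B 0) ≤ √k * l2 (B 0)
  have hCS : l1 (B 0) ≤ Real.sqrt k * l2 (B 0) := by
    have hind : l1 (B 0) = ∑ n : Fin N, (if (n : ℕ) < k then (1:ℝ) else 0) * |B 0 n| := by
      unfold l1
      refine Finset.sum_congr rfl fun n _ => ?_
      by_cases hn : (n : ℕ) < k
      · rw [if_pos hn, one_mul]
      · have hB0 : B 0 n = 0 := by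
          show blockRestr k 0 η n = 0
          rw [blockRestr, if_neg (by omega)]
        rw [if_neg hn, zero_mul, hB0, abs_zero]
    have hcs := Finset.sum_mul_sq_le_sq_mul_sq Finset.univ
      (fun n : Fin N => if (n : ℕ) < k then (1:ℝ) else 0) (fun n => |B 0 n|)
    have hcard : ∑ n : Fin N, (if (n : ℕ) < k then (1:ℝ) else 0) ^ 2 ≤ (k : ℝ) := by
      have : ∀ n : Fin N, (if (n : ℕ) < k then (1:ℝ) else 0) ^ 2
          = if (n : ℕ) < k then (1:ℝ) else 0 := by
        intro n; split <;> norm_num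
      rw [Finset.sum_congr rfl fun n _ => this n, Finset.sum_boole]
      have hle : (Finset.univ.filter (fun n : Fin N => (n : ℕ) < k)).card
          ≤ (Finset.range k).card := by
        refine Finset.card_le_card_of_injOn (fun n => (n : ℕ)) ?_ ?_
        · intro n hn
          exact Finset.mem_range.2 (Finset.mem_filter.1 hn).2
        · exact fun a _ b _ h => Fin.ext h
      rw [Finset.card_range] at hle
      exact_mod_cast hle
    have habs : ∑ n : Fin N, |B 0 n| ^ 2 = ∑ n, B 0 n ^ 2 := by
      simp [sq_abs]
    have hsq : (l1 (B 0)) ^ 2 ≤ (k : ℝ) * ∑ n, B 0 n ^ 2 := by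
      rw [hind]
      calc (∑ n : Fin N, (if (n : ℕ) < k then (1:ℝ) else 0) * |B 0 n|) ^ 2
          ≤ (∑ n : Fin N, (if (n : ℕ) < k then (1:ℝ) else 0) ^ 2)
            * ∑ n, |B 0 n| ^ 2 := hcs
        _ ≤ (k : ℝ) * ∑ n, B 0 n ^ 2 := by
            rw [habs]
            exact mul_le_mul_of_nonneg_right hcard
              (Finset.sum_nonneg fun n _ => sq_nonneg _)
    calc l1 (B 0) = Real.sqrt ((l1 (B 0)) ^ 2) := (Real.sqrt_sq (l1_nonneg _)).symm
      _ ≤ Real.sqrt ((k : ℝ) * ∑ n, B 0 n ^ 2) := Real.sqrt_le_sqrt hsq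
      _ = Real.sqrt k * l2 (B 0) := by
          rw [Real.sqrt_mul (Nat.cast_nonneg k)]
          rfl
  -- final algebra
  have hTnn : 0 ≤ T := l1_nonneg _
  have hchain : (1 - δ) * l2 v01 ≤ (1 + δ) * T :=
    le_trans hlow (le_trans hl2Φ hSum)
  have hB0T : l1 (B 0) * (1 - δ) ≤ Real.sqrt k * ((1 + δ) * T) := by
    have h5 : l1 (B 0) * (1 - δ) ≤ (Real.sqrt k * l2 v01) * (1 - δ) := by
      refine mul_le_mul_of_nonneg_right ?_ hδ'.le
      exact le_trans hCS (mul_le_mul_of_nonneg_left hB0v01 (Real.sqrt_nonneg _))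
    have h6 : (Real.sqrt k * l2 v01) * (1 - δ) ≤ Real.sqrt k * ((1 + δ) * T) := by
      have := mul_le_mul_of_nonneg_left hchain (Real.sqrt_nonneg (k:ℝ))
      nlinarith [Real.sqrt_nonneg (k:ℝ)]
    linarith
  rw [hsplit]
  have hrhs : (1 + Real.sqrt k * (1 + δ) / (1 - δ)) * T
      = T + (Real.sqrt k * ((1 + δ) * T)) / (1 - δ) := by
    field_simp
  rw [hrhs]
  have : l1 (B 0) ≤ (Real.sqrt k * ((1 + δ) * T)) / (1 - δ) :=
    (le_div_iff₀ hδ').2 hB0T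
  linarith
end
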